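/- Let N ≥ 4 and let r = r₁r₂r₃ ∈ {0,1}³ be a single rule. For every interior position i with 2 ≤ i ≤ N−2, if x = x₁x₂ ∈ {0,1}² is a contiguous length-2 substring of r (i.e. x = r₁r₂ or x = r₂r₃) and z = z₁z₂ ∈ {0,1}² is not a contiguous length-2 substring of r, then φ^{i,i+1}_x ≥ φ^{i,i+1}_z. -/
import Mathlib

/-- `occCount a x` : number of starting positions at which the rule `a` (a binary
string of length `k`) occurs as a contiguous substring of the binary string `x`
of length `N`.  This is the value `F_N(a)(x)` of the transform. -/
def occCount {k N : ℕ} (a : Fin k → Bool) (x : Fin N → Bool) : ℕ :=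
  ((List.range (N - k + 1)).filter
    (fun i => (List.ofFn a).isPrefixOf ((List.ofFn x).drop i))).length

/-- The duplet moment `φ^{p,q}_{x₁x₂}` for the single rule `r`:
the sum of `f_r(y) = F_N(r)(y)` over all strings `y` with `y p = x₁`, `y q = x₂`. -/
def duplet {N : ℕ} (r : Fin 3 → Bool) (p q : Fin N) (x1 x2 : Bool) : ℕ :=
  ∑ y : Fin N → Bool, if y p = x1 ∧ y q = x2 then occCount r y else 0

namespace StmtAux

def allowed {N : ℕ} (r : Fin 3 → Bool) (p q : Fin N) (x1 x2 : Bool) (j : ℕ)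
    (t : Fin N) : Finset Bool :=
  Finset.univ.filter (fun b =>
    (t = p → b = x1) ∧ (t = q → b = x2) ∧ (∀ s : Fin 3, (t : ℕ) = j + s → b = r s))

def cnt {N : ℕ} (r : Fin 3 → Bool) (p q : Fin N) (x1 x2 : Bool) (j : ℕ) : ℕ :=
  ∏ t : Fin N, (allowed r p q x1 x2 j t).card

theorem lenfil (n : ℕ) (p : ℕ → Bool) :
    ((List.range n).filter p).length = ∑ j ∈ Finset.range n, if p j then 1 else 0 := by
  induction n with
  | zero => simp
  | succ n ih =>
    rw [List.range_succ, Finset.sum_range_succ, List.filter_append, ← ih]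
    simp only [List.length_append]
    split <;> rename_i h <;> simp [List.filter, h]

theorem prefchar (N : ℕ) (r : Fin 3 → Bool) (y : Fin N → Bool) (j : ℕ) (hj : j + 3 ≤ N) :
    (List.ofFn r).isPrefixOf ((List.ofFn y).drop j) = true ↔
      ∀ s : Fin 3, ∀ h : j + (s:ℕ) < N, y ⟨j + s, h⟩ = r s := by
  have hlen : (List.ofFn r).length = 3 := by simp
  have key : ((List.ofFn y).drop j).take 3 =
      List.ofFn (fun s : Fin 3 => y ⟨j + s, by omega⟩) := by
    apply List.ext_getElem
    · simp; try omega
    · intro n h1 h2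
      simp only [List.getElem_take, List.getElem_drop, List.getElem_ofFn]
  rw [List.isPrefixOf_iff_prefix, List.prefix_iff_eq_take, hlen, key, List.ofFn_inj]
  constructor
  · intro h s hs
    rw [funext_iff] at h
    exact (h s).symm
  · intro h
    funext s
    exact (h s (by omega)).symm

theorem duplet_eq {N : ℕ} (hN : 3 ≤ N) (r : Fin 3 → Bool) (p q : Fin N) (x1 x2 : Bool) :
    duplet r p q x1 x2 = ∑ j ∈ Finset.range (N - 2), cnt r p q x1 x2 j := by
  have h1 : N - 3 + 1 = N - 2 := by omega
  have step1 : duplet r p q x1 x2 =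
      ∑ y : Fin N → Bool, ∑ j ∈ Finset.range (N - 2),
        if (y p = x1 ∧ y q = x2) ∧ (∀ s : Fin 3, ∀ h : j + (s:ℕ) < N, y ⟨j + s, h⟩ = r s)
        then 1 else 0 := by
    unfold duplet occCount
    refine Finset.sum_congr rfl fun y _ => ?_
    rw [h1, lenfil]
    split
    · rename_i hy
      refine Finset.sum_congr rfl fun j hj => ?_
      rw [Finset.mem_range] at hj
      simp only [prefchar N r y j (by omega), hy, true_and]
    · rename_i hy
      symm
      refine Finset.sum_eq_zero fun j hj => ?_
      simp only [ite_eq_right_iff]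
      intro h
      exact absurd h.1 hy
  rw [step1, Finset.sum_comm]
  refine Finset.sum_congr rfl fun j hj => ?_
  rw [Finset.mem_range] at hj
  have step2 : ∀ y : Fin N → Bool,
      ((y p = x1 ∧ y q = x2) ∧ (∀ s : Fin 3, ∀ h : j + (s:ℕ) < N, y ⟨j + s, h⟩ = r s)) ↔
      ∀ t, y t ∈ allowed r p q x1 x2 j t := by
    intro y
    constructor
    · rintro ⟨⟨h1', h2'⟩, h3'⟩ t
      simp only [allowed, Finset.mem_filter, Finset.mem_univ, true_and]
      refine ⟨fun ht => ht ▸ h1', fun ht => ht ▸ h2', fun s hs => ?_⟩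
      have hlt : j + (s:ℕ) < N := hs ▸ t.isLt
      have : t = ⟨j + s, hlt⟩ := Fin.ext hs
      rw [this]
      exact h3' s hlt
    · intro h
      have mem : ∀ t : Fin N, (t = p → y t = x1) ∧ (t = q → y t = x2) ∧
          (∀ s : Fin 3, (t : ℕ) = j + s → y t = r s) := fun t =>
        (Finset.mem_filter.mp (h t)).2
      exact ⟨⟨(mem p).1 rfl, (mem q).2.1 rfl⟩, fun s hs => (mem ⟨j + s, hs⟩).2.2 s rfl⟩
  calc (∑ y : Fin N → Bool,
        if (y p = x1 ∧ y q = x2) ∧ (∀ s : Fin 3, ∀ h : j + (s:ℕ) < N, y ⟨j + s, h⟩ = r s)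
        then 1 else 0)
      = ∑ y : Fin N → Bool, if (∀ t, y t ∈ allowed r p q x1 x2 j t) then 1 else 0 := by
        refine Finset.sum_congr rfl fun y _ => ?_
        simp only [step2 y]
    _ = (Finset.univ.filter (fun y : Fin N → Bool => ∀ t, y t ∈ allowed r p q x1 x2 j t)).card := by
        rw [Finset.card_filter]
    _ = (Fintype.piFinset (allowed r p q x1 x2 j)).card := by
        congr 1
        ext y
        simp [Fintype.mem_piFinset]
    _ = cnt r p q x1 x2 j := by
        rw [Fintype.card_piFinset]
        rfl

section helpers
variable {P : Bool → Prop} [DecidablePred P]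

theorem card_le_two : (Finset.univ.filter P).card ≤ 2 :=
  le_trans (Finset.card_filter_le _ _) (by simp)

theorem card_eq_one (c : Bool) (h : ∀ b, P b ↔ b = c) :
    (Finset.univ.filter P).card = 1 := by
  have : Finset.univ.filter P = {c} := by ext b; simp [h]
  rw [this]; rfl

theorem card_le_one (c : Bool) (h : ∀ b, P b → b = c) :
    (Finset.univ.filter P).card ≤ 1 := by
  have : Finset.univ.filter P ⊆ {c} := by intro b hb; simp at hb ⊢; exact h b hb
  simpa using Finset.card_le_card this

theorem card_eq_zero (h : ∀ b, ¬ P b) : (Finset.univ.filter P).card = 0 := by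
  have : Finset.univ.filter P = ∅ := by ext b; simp [h]
  rw [this]; rfl

theorem card_eq_two (h : ∀ b, P b) : (Finset.univ.filter P).card = 2 := by
  have : Finset.univ.filter P = Finset.univ := by ext b; simp [h]
  rw [this]; rfl

end helpers

theorem prod_eq_pow {N : ℕ} (K : Finset (Fin N)) (f : Fin N → ℕ)
    (h1 : ∀ t ∈ K, f t = 1) (h2 : ∀ t ∉ K, f t = 2) :
    ∏ t, f t = 2 ^ (N - K.card) := by
  rw [← Finset.prod_mul_prod_compl K]
  rw [Finset.prod_congr rfl h1, Finset.prod_congr rfl (fun t ht => h2 t (by simpa using ht))]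
  simp [Finset.card_compl]

theorem prod_le_pow {N : ℕ} (K : Finset (Fin N)) (f : Fin N → ℕ)
    (h1 : ∀ t ∈ K, f t ≤ 1) (h2 : ∀ t, f t ≤ 2) :
    ∏ t, f t ≤ 2 ^ (N - K.card) := by
  calc ∏ t, f t ≤ ∏ t, (if t ∈ K then 1 else 2) := by
        refine Finset.prod_le_prod' fun t _ => ?_
        split
        · exact h1 t ‹_›
        · exact h2 t
    _ = 2 ^ (N - K.card) := prod_eq_pow K _ (fun t ht => by simp [ht]) (fun t ht => by simp [ht])

variable {N : ℕ} {r : Fin 3 → Bool} {p q : Fin N}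

/-- windows disjoint from the pair give equal counts -/
theorem cnt_out (hpq : (p:ℕ) + 1 = q) (z1 z2 x1 x2 : Bool) (j : ℕ)
    (hj : ∀ s : ℕ, s < 3 → j + s ≠ (p:ℕ) ∧ j + s ≠ (q:ℕ)) :
    cnt r p q z1 z2 j = cnt r p q x1 x2 j := by
  unfold cnt allowed
  refine Finset.prod_congr rfl fun t _ => ?_
  by_cases hp : t = p
  · subst hp
    rw [card_eq_one (P := _) z1 ?_, card_eq_one (P := _) x1 ?_] <;>
    · intro b
      constructor
      · rintro ⟨h1, -, -⟩; exact h1 rfl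
      · rintro rfl
        refine ⟨fun _ => rfl, fun h => ?_, fun s hs => ?_⟩
        · exact absurd (congrArg Fin.val h) (by omega)
        · exact absurd hs.symm (hj s s.isLt).1
  · by_cases hq : t = q
    · subst hq
      rw [card_eq_one (P := _) z2 ?_, card_eq_one (P := _) x2 ?_] <;>
      · intro b
        constructor
        · rintro ⟨-, h2, -⟩; exact h2 rfl
        · rintro rfl
          refine ⟨fun h => ?_, fun _ => rfl, fun s hs => ?_⟩
          · exact absurd (congrArg Fin.val h) (by omega)
          · exact absurd hs.symm (hj s s.isLt).2
    · congr 1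
      ext b
      simp [allowed, hp, hq]

/-- the window starting at `p` for `x = (r 0, r 1)` -/
theorem cnt_in_right (hpq : (p:ℕ) + 1 = q) (hpN : (p:ℕ) + 3 ≤ N)
    {x1 x2 : Bool} (hx1 : x1 = r 0) (hx2 : x2 = r 1) :
    cnt r p q x1 x2 (p:ℕ) = 2 ^ (N - 3) := by
  have hq1 : (q:ℕ) = (p:ℕ) + 1 := hpq.symm
  set pp2 : Fin N := ⟨(p:ℕ) + 2, by omega⟩ with hpp2
  have hK : (insert p (insert q ({pp2} : Finset (Fin N)))).card = 3 := by
    rw [Finset.card_insert_of_notMem (by simp [Fin.ext_iff, hpp2]; try omega),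
      Finset.card_insert_of_notMem (by simp [Fin.ext_iff, hpp2]; try omega),
      Finset.card_singleton]
  unfold cnt
  rw [prod_eq_pow (insert p (insert q ({pp2} : Finset (Fin N)))) _ ?_ ?_, hK]
  · intro t ht
    simp only [Finset.mem_insert, Finset.mem_singleton] at ht
    rcases ht with rfl | rfl | rfl
    · refine card_eq_one x1 fun b => ⟨fun h => h.1 rfl, ?_⟩
      rintro rfl
      refine ⟨fun _ => rfl, fun h => absurd (congrArg Fin.val h) (by omega), fun s hs => ?_⟩
      have h3 := s.isLt
      have : s = (0 : Fin 3) := Fin.ext (by omega)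
      subst this
      exact hx1
    · refine card_eq_one x2 fun b => ⟨fun h => h.2.1 rfl, ?_⟩
      rintro rfl
      refine ⟨fun h => absurd (congrArg Fin.val h) (by omega), fun _ => rfl, fun s hs => ?_⟩
      have h3 := s.isLt
      have : s = (1 : Fin 3) := Fin.ext (by simp; try omega)
      subst this
      exact hx2
    · refine card_eq_one (r 2) fun b => ⟨fun h => h.2.2 2 (by simp [hpp2]), ?_⟩
      rintro rfl
      refine ⟨fun h => absurd (congrArg Fin.val h) (by simp [hpp2]; try omega),
        fun h => absurd (congrArg Fin.val h) (by simp [hpp2]; try omega), fun s hs => ?_⟩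
      have h3 := s.isLt
      simp only [hpp2] at hs
      have : s = (2 : Fin 3) := Fin.ext (by simp; try omega)
      subst this
      rfl
  · intro t ht
    simp only [Finset.mem_insert, Finset.mem_singleton, not_or] at ht
    obtain ⟨ht1, ht2, ht3⟩ := ht
    refine card_eq_two fun b => ⟨fun h => absurd h ht1, fun h => absurd h ht2, fun s hs => ?_⟩
    exfalso
    have h3 := s.isLt
    have : (t:ℕ) = (p:ℕ) ∨ (t:ℕ) = (q:ℕ) ∨ (t:ℕ) = (p:ℕ) + 2 := by omega
    rcases this with h | h | h
    · exact ht1 (Fin.ext h)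
    · exact ht2 (Fin.ext h)
    · exact ht3 (Fin.ext h)

/-- the window starting at `p-1` for `x = (r 1, r 2)` -/
theorem cnt_in_left (hpq : (p:ℕ) + 1 = q) (hp1 : 1 ≤ (p:ℕ))
    {x1 x2 : Bool} (hx1 : x1 = r 1) (hx2 : x2 = r 2) :
    cnt r p q x1 x2 ((p:ℕ) - 1) = 2 ^ (N - 3) := by
  have hq1 : (q:ℕ) = (p:ℕ) + 1 := hpq.symm
  have hqN := q.isLt
  set pm1 : Fin N := ⟨(p:ℕ) - 1, by omega⟩ with hpm1
  have hK : (insert pm1 (insert p ({q} : Finset (Fin N)))).card = 3 := by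
    rw [Finset.card_insert_of_notMem (by simp [Fin.ext_iff, hpm1]; try omega),
      Finset.card_insert_of_notMem (by simp [Fin.ext_iff]; try omega),
      Finset.card_singleton]
  unfold cnt
  rw [prod_eq_pow (insert pm1 (insert p ({q} : Finset (Fin N)))) _ ?_ ?_, hK]
  · intro t ht
    simp only [Finset.mem_insert, Finset.mem_singleton] at ht
    rcases ht with rfl | rfl | rfl
    · refine card_eq_one (r 0) fun b => ⟨fun h => h.2.2 0 (by simp [hpm1]), ?_⟩
      rintro rfl
      refine ⟨fun h => absurd (congrArg Fin.val h) (by simp [hpm1]; try omega),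
        fun h => absurd (congrArg Fin.val h) (by simp [hpm1]; try omega), fun s hs => ?_⟩
      have h3 := s.isLt
      simp only [hpm1] at hs
      have : s = (0 : Fin 3) := Fin.ext (by omega)
      subst this
      rfl
    · refine card_eq_one x1 fun b => ⟨fun h => h.1 rfl, ?_⟩
      rintro rfl
      refine ⟨fun _ => rfl, fun h => absurd (congrArg Fin.val h) (by omega), fun s hs => ?_⟩
      have h3 := s.isLt
      have : s = (1 : Fin 3) := Fin.ext (by simp; try omega)
      subst this
      exact hx1
    · refine card_eq_one x2 fun b => ⟨fun h => h.2.1 rfl, ?_⟩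
      rintro rfl
      refine ⟨fun h => absurd (congrArg Fin.val h) (by omega), fun _ => rfl, fun s hs => ?_⟩
      have h3 := s.isLt
      have : s = (2 : Fin 3) := Fin.ext (by simp; try omega)
      subst this
      exact hx2
  · intro t ht
    simp only [Finset.mem_insert, Finset.mem_singleton, not_or] at ht
    obtain ⟨ht1, ht2, ht3⟩ := ht
    refine card_eq_two fun b => ⟨fun h => absurd h ht2, fun h => absurd h ht3, fun s hs => ?_⟩
    exfalso
    have h3 := s.isLt
    have : (t:ℕ) = (p:ℕ) - 1 ∨ (t:ℕ) = (p:ℕ) ∨ (t:ℕ) = (q:ℕ) := by omega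
    rcases this with h | h | h
    · exact ht1 (Fin.ext (by simp [hpm1, h]))
    · exact ht2 (Fin.ext h)
    · exact ht3 (Fin.ext h)

/-- `z` fails on the window starting at `p` -/
theorem cnt_zero_right (hpq : (p:ℕ) + 1 = q) {z1 z2 : Bool}
    (hz : ¬ (z1 = r 0 ∧ z2 = r 1)) :
    cnt r p q z1 z2 (p:ℕ) = 0 := by
  unfold cnt
  by_cases h1 : z1 = r 0
  · have h2 : z2 ≠ r 1 := fun h => hz ⟨h1, h⟩
    refine Finset.prod_eq_zero (Finset.mem_univ q) (card_eq_zero fun b hb => ?_)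
    have e1 : b = z2 := hb.2.1 rfl
    have e2 : b = r 1 := hb.2.2 1 (by simp; try omega)
    exact h2 (e1 ▸ e2)
  · refine Finset.prod_eq_zero (Finset.mem_univ p) (card_eq_zero fun b hb => ?_)
    have e1 : b = z1 := hb.1 rfl
    have e2 : b = r 0 := hb.2.2 0 (by simp)
    exact h1 (e1 ▸ e2)

/-- `z` fails on the window starting at `p-1` -/
theorem cnt_zero_left (hpq : (p:ℕ) + 1 = q) (hp1 : 1 ≤ (p:ℕ)) {z1 z2 : Bool}
    (hz : ¬ (z1 = r 1 ∧ z2 = r 2)) :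
    cnt r p q z1 z2 ((p:ℕ) - 1) = 0 := by
  unfold cnt
  by_cases h1 : z1 = r 1
  · have h2 : z2 ≠ r 2 := fun h => hz ⟨h1, h⟩
    refine Finset.prod_eq_zero (Finset.mem_univ q) (card_eq_zero fun b hb => ?_)
    have e1 : b = z2 := hb.2.1 rfl
    have e2 : b = r 2 := hb.2.2 2 (by simp; try omega)
    exact h2 (e1 ▸ e2)
  · refine Finset.prod_eq_zero (Finset.mem_univ p) (card_eq_zero fun b hb => ?_)
    have e1 : b = z1 := hb.1 rfl
    have e2 : b = r 1 := hb.2.2 1 (by simp; try omega)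
    exact h1 (e1 ▸ e2)

/-- bound for the window starting at `p-2` -/
theorem cnt_le_m2 (hpq : (p:ℕ) + 1 = q) (hp2 : 2 ≤ (p:ℕ)) (z1 z2 : Bool) :
    cnt r p q z1 z2 ((p:ℕ) - 2) ≤ 2 ^ (N - 4) := by
  have hq1 : (q:ℕ) = (p:ℕ) + 1 := hpq.symm
  have hqN := q.isLt
  set pm2 : Fin N := ⟨(p:ℕ) - 2, by omega⟩ with hpm2
  set pm1 : Fin N := ⟨(p:ℕ) - 1, by omega⟩ with hpm1
  have hK : (insert pm2 (insert pm1 (insert p ({q} : Finset (Fin N))))).card = 4 := by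
    rw [Finset.card_insert_of_notMem (by simp [Fin.ext_iff, hpm2, hpm1]; try omega),
      Finset.card_insert_of_notMem (by simp [Fin.ext_iff, hpm1]; try omega),
      Finset.card_insert_of_notMem (by simp [Fin.ext_iff]; try omega),
      Finset.card_singleton]
  unfold cnt
  calc ∏ t : Fin N, (allowed r p q z1 z2 ((p:ℕ) - 2) t).card
      ≤ 2 ^ (N - (insert pm2 (insert pm1 (insert p ({q} : Finset (Fin N))))).card) := by
        refine prod_le_pow _ _ ?_ (fun t => card_le_two)
        intro t ht
        simp only [Finset.mem_insert, Finset.mem_singleton] at ht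
        rcases ht with rfl | rfl | rfl | rfl
        · exact card_le_one (r 0) fun b hb => hb.2.2 0 (by simp [hpm2])
        · exact card_le_one (r 1) fun b hb => hb.2.2 1 (by simp [hpm1]; try omega)
        · exact card_le_one z1 fun b hb => hb.1 rfl
        · exact card_le_one z2 fun b hb => hb.2.1 rfl
    _ = 2 ^ (N - 4) := by rw [hK]

/-- bound for the window starting at `p+1` -/
theorem cnt_le_p1 (hpq : (p:ℕ) + 1 = q) (hp3 : (p:ℕ) + 4 ≤ N) (z1 z2 : Bool) :
    cnt r p q z1 z2 ((p:ℕ) + 1) ≤ 2 ^ (N - 4) := by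
  have hq1 : (q:ℕ) = (p:ℕ) + 1 := hpq.symm
  set pp2 : Fin N := ⟨(p:ℕ) + 2, by omega⟩ with hpp2
  set pp3 : Fin N := ⟨(p:ℕ) + 3, by omega⟩ with hpp3
  have hK : (insert p (insert q (insert pp2 ({pp3} : Finset (Fin N))))).card = 4 := by
    rw [Finset.card_insert_of_notMem (by simp [Fin.ext_iff, hpp2, hpp3]; try omega),
      Finset.card_insert_of_notMem (by simp [Fin.ext_iff, hpp2, hpp3]; try omega),
      Finset.card_insert_of_notMem (by simp [Fin.ext_iff, hpp2, hpp3]; try omega),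
      Finset.card_singleton]
  unfold cnt
  calc ∏ t : Fin N, (allowed r p q z1 z2 ((p:ℕ) + 1) t).card
      ≤ 2 ^ (N - (insert p (insert q (insert pp2 ({pp3} : Finset (Fin N))))).card) := by
        refine prod_le_pow _ _ ?_ (fun t => card_le_two)
        intro t ht
        simp only [Finset.mem_insert, Finset.mem_singleton] at ht
        rcases ht with rfl | rfl | rfl | rfl
        · exact card_le_one z1 fun b hb => hb.1 rfl
        · exact card_le_one z2 fun b hb => hb.2.1 rfl
        · exact card_le_one (r 1) fun b hb => hb.2.2 1 (by simp [hpp2]; try omega)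
        · exact card_le_one (r 2) fun b hb => hb.2.2 2 (by simp [hpp3]; try omega)
    _ = 2 ^ (N - 4) := by rw [hK]

end StmtAux

set_option maxHeartbeats 1600000 in
open StmtAux in
theorem stmt0 (N : ℕ) (hN : 4 ≤ N) (r : Fin 3 → Bool)
    (i : ℕ) (hi1 : 2 ≤ i) (hi2 : i ≤ N - 2)
    (x1 x2 z1 z2 : Bool)
    (hx : (x1 = r 0 ∧ x2 = r 1) ∨ (x1 = r 1 ∧ x2 = r 2))
    (hz : ¬ ((z1 = r 0 ∧ z2 = r 1) ∨ (z1 = r 1 ∧ z2 = r 2))) :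
    duplet r (⟨i - 1, by omega⟩ : Fin N) (⟨i, by omega⟩ : Fin N) z1 z2 ≤
      duplet r (⟨i - 1, by omega⟩ : Fin N) (⟨i, by omega⟩ : Fin N) x1 x2 := by
  have hz1 : ¬ (z1 = r 0 ∧ z2 = r 1) := fun h => hz (Or.inl h)
  have hz2 : ¬ (z1 = r 1 ∧ z2 = r 2) := fun h => hz (Or.inr h)
  set p : Fin N := ⟨i - 1, by omega⟩ with hp
  set q : Fin N := ⟨i, by omega⟩ with hq
  have hpq : (p:ℕ) + 1 = q := by simp [hp, hq]; omega
  have hpv : (p:ℕ) = i - 1 := rfl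
  have hqv : (q:ℕ) = i := rfl
  have hp1 : 1 ≤ (p:ℕ) := by omega
  have hpN : (p:ℕ) + 3 ≤ N := by omega
  rw [duplet_eq (by omega) r p q z1 z2, duplet_eq (by omega) r p q x1 x2]
  have split := fun (w1 w2 : Bool) => (Finset.sum_filter_add_sum_filter_not (Finset.range (N-2))
    (fun j => j = (p:ℕ) - 2 ∨ j = (p:ℕ) - 1 ∨ j = (p:ℕ) ∨ j = (p:ℕ) + 1)
    (cnt r p q w1 w2)).symm
  rw [split z1 z2, split x1 x2]
  have houtside : ∀ j ∈ (Finset.range (N-2)).filter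
      (fun j => ¬(j = (p:ℕ) - 2 ∨ j = (p:ℕ) - 1 ∨ j = (p:ℕ) ∨ j = (p:ℕ) + 1)),
      cnt r p q z1 z2 j = cnt r p q x1 x2 j := by
    intro j hj
    simp only [Finset.mem_filter, Finset.mem_range, not_or] at hj
    exact cnt_out hpq z1 z2 x1 x2 j (by intro s hs; constructor <;> omega)
  rw [Finset.sum_congr rfl houtside]
  apply Nat.add_le_add_right
  -- now compare the boundary sums
  set S := (Finset.range (N-2)).filter
      (fun j => j = (p:ℕ) - 2 ∨ j = (p:ℕ) - 1 ∨ j = (p:ℕ) ∨ j = (p:ℕ) + 1) with hS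
  set d : ℕ → ℕ := fun j =>
    if j = (p:ℕ) - 2 ∧ 2 ≤ (p:ℕ) then 2 ^ (N - 4)
    else if j = (p:ℕ) + 1 then 2 ^ (N - 4) else 0 with hd
  have hzle : ∑ j ∈ S, cnt r p q z1 z2 j ≤ ∑ j ∈ S, d j := by
    refine Finset.sum_le_sum fun j hj => ?_
    simp only [hS, Finset.mem_filter, Finset.mem_range] at hj
    by_cases hA : j = (p:ℕ) - 2 ∧ 2 ≤ (p:ℕ)
    · obtain ⟨hA1, hA2⟩ := hA
      subst hA1
      have hdv : d ((p:ℕ) - 2) = 2 ^ (N - 4) := by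
        simp [hd, hA2]
      rw [hdv]
      exact cnt_le_m2 hpq hA2 z1 z2
    · by_cases hB : j = (p:ℕ) + 1
      · subst hB
        have hdv : d ((p:ℕ) + 1) = 2 ^ (N - 4) := by
          simp [hd, hA]
        rw [hdv]
        exact cnt_le_p1 hpq (by omega) z1 z2
      · have : j = (p:ℕ) - 1 ∨ j = (p:ℕ) := by omega
        rcases this with h | h
        · rw [h, cnt_zero_left hpq hp1 hz2]
          exact Nat.zero_le _
        · rw [h, cnt_zero_right hpq hz1]
          exact Nat.zero_le _
  have hdsum : ∑ j ∈ S, d j ≤ 2 ^ (N - 4) + 2 ^ (N - 4) := by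
    have hsub : ∑ j ∈ S ∩ ({(p:ℕ) - 2, (p:ℕ) + 1} : Finset ℕ), d j = ∑ j ∈ S, d j := by
      refine Finset.sum_subset Finset.inter_subset_left fun x hx hx' => ?_
      simp only [Finset.mem_inter, Finset.mem_insert, Finset.mem_singleton, not_and, not_or] at hx'
      have := hx' hx
      simp only [hd]
      rw [if_neg (by tauto), if_neg (by tauto)]
    rw [← hsub]
    calc ∑ j ∈ S ∩ ({(p:ℕ) - 2, (p:ℕ) + 1} : Finset ℕ), d j
        ≤ ∑ j ∈ ({(p:ℕ) - 2, (p:ℕ) + 1} : Finset ℕ), d j :=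
          Finset.sum_le_sum_of_subset Finset.inter_subset_right
      _ ≤ 2 ^ (N - 4) + 2 ^ (N - 4) := by
          rw [Finset.sum_insert (by simp; try omega), Finset.sum_singleton]
          have hdle : ∀ j, d j ≤ 2 ^ (N - 4) := by
            intro j
            simp only [hd]
            split
            · exact le_refl _
            · split
              · exact le_refl _
              · exact Nat.zero_le _
          exact Nat.add_le_add (hdle _) (hdle _)
  have hpow : 2 ^ (N - 4) + 2 ^ (N - 4) = 2 ^ (N - 3) := by
    rw [show N - 3 = N - 4 + 1 by omega, pow_succ]
    ring
  have hxge : 2 ^ (N - 3) ≤ ∑ j ∈ S, cnt r p q x1 x2 j := by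
    rcases hx with ⟨hx1, hx2⟩ | ⟨hx1, hx2⟩
    · have hmem : (p:ℕ) ∈ S := by
        simp only [hS, Finset.mem_filter, Finset.mem_range]
        exact ⟨by omega, by tauto⟩
      calc 2 ^ (N - 3) = cnt r p q x1 x2 (p:ℕ) := (cnt_in_right hpq hpN hx1 hx2).symm
        _ ≤ ∑ j ∈ S, cnt r p q x1 x2 j :=
            Finset.single_le_sum (fun j _ => Nat.zero_le _) hmem
    · have hmem : (p:ℕ) - 1 ∈ S := by
        simp only [hS, Finset.mem_filter, Finset.mem_range]
        exact ⟨by omega, by tauto⟩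
      calc 2 ^ (N - 3) = cnt r p q x1 x2 ((p:ℕ) - 1) := (cnt_in_left hpq hp1 hx1 hx2).symm
        _ ≤ ∑ j ∈ S, cnt r p q x1 x2 j :=
            Finset.single_le_sum (fun j _ => Nat.zero_le _) hmem
  omega
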